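/- Let σ be an injective endomorphism of a semiprime left noetherian ring R. Then σ is an automorphism of R if and only if there exists an essential left ideal L of R with L ⊆ σ(R) such that σ^n(L) is a left ideal of R for every n ∈ ℕ. -/

import Mathlib

universe u v

/-- The left annihilator of the set `L` in `S` is zero. -/
def LAnnZero (S : Type u) [Ring S] (L : Set S) : Prop :=
  ∀ a : S, (∀ x ∈ L, a * x = 0) → a = 0

/-- The right annihilator of the set `L` in `S` is zero. -/
def RAnnZero (S : Type u) [Ring S] (L : Set S) : Prop :=
  ∀ a : S, (∀ x ∈ L, x * a = 0) → a = 0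

/-- A left ideal is essential: it meets every nonzero left ideal nontrivially. -/
def IsEssentialLeftIdeal {S : Type u} [Ring S] (L : Ideal S) : Prop :=
  ∀ I : Ideal S, I ≠ ⊥ → L ⊓ I ≠ ⊥

/-- A (possibly noncommutative) ring is semiprime: `aRa = 0` implies `a = 0`. -/
def IsSemiprimeRing (S : Type u) [Ring S] : Prop :=
  ∀ a : S, (∀ r : S, a * r * a = 0) → a = 0

/-- A (possibly noncommutative) ring is prime: it is nonzero and `aRb = 0`
implies `a = 0` or `b = 0`. -/
def IsPrimeRingE (S : Type u) [Ring S] : Prop :=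
  Nontrivial S ∧ ∀ a b : S, (∀ r : S, a * r * b = 0) → a = 0 ∨ b = 0

/-- `a` is left regular: its left annihilator is zero. -/
def LeftReg {S : Type u} [Ring S] (a : S) : Prop := ∀ x : S, x * a = 0 → x = 0

/-- `a` is right regular: its right annihilator is zero. -/
def RightReg {S : Type u} [Ring S] (a : S) : Prop := ∀ x : S, a * x = 0 → x = 0

/-- `a` is regular: neither a left nor a right zero divisor. -/
def Reg {S : Type u} [Ring S] (a : S) : Prop := LeftReg a ∧ RightReg a

/-- A self-map of a ring has large image: its range contains an essential
left ideal with zero right annihilator. -/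
def HasLargeImage {S : Type u} [Ring S] (f : S → S) : Prop :=
  ∃ L : Ideal S, IsEssentialLeftIdeal L ∧ RAnnZero S (L : Set S) ∧ (L : Set S) ⊆ Set.range f

/-- The left annihilator of a set, as a left ideal. -/
def lAnnIdeal (S : Type u) [Ring S] (X : Set S) : Ideal S where
  carrier := {a | ∀ x ∈ X, a * x = 0}
  add_mem' := by intro a b ha hb x hx; rw [add_mul, ha x hx, hb x hx, add_zero]
  zero_mem' := by intro x hx; rw [zero_mul]
  smul_mem' := by intro r a ha x hx; simp only [smul_eq_mul, mul_assoc, ha x hx, mul_zero]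

/-- ACC on left annihilator ideals. -/
def AccLeftAnn (S : Type u) [Ring S] : Prop :=
  ∀ X : ℕ → Set S, (∀ n, lAnnIdeal S (X n) ≤ lAnnIdeal S (X (n + 1))) →
    ∃ N, ∀ m, N ≤ m → lAnnIdeal S (X m) = lAnnIdeal S (X N)

/-- Finite uniform (Goldie) dimension on the left: no infinite independent
family of nonzero left ideals. -/
def FinUdim (S : Type u) [Ring S] : Prop :=
  ¬ ∃ f : ℕ → Ideal S, (∀ n, f n ≠ ⊥) ∧ iSupIndep f

/-- Left Goldie ring: ACC on left annihilators and finite left uniform dimension. -/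
def IsLeftGoldie (S : Type u) [Ring S] : Prop := AccLeftAnn S ∧ FinUdim S

/-- The left uniform (Goldie) dimension of `S` is at least `n`. -/
def UdimGE (S : Type u) [Ring S] (n : ℕ) : Prop :=
  ∃ f : Fin n → Ideal S, (∀ i, f i ≠ ⊥) ∧ iSupIndep f

/-- `ι : R →+* Q` realizes `Q` as a classical left quotient ring of `R`:
`ι` is injective, regular elements become units, and every element of `Q`
is a left fraction `(ι s)⁻¹ * (ι a)` with `s` regular. -/
structure IsLeftQuotRing {R : Type u} {Q : Type v} [Ring R] [Ring Q] (ι : R →+* Q) : Prop where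
  inj : Function.Injective ι
  unit : ∀ a : R, Reg a → IsUnit (ι a)
  frac : ∀ q : Q, ∃ a s : R, Reg s ∧ ι s * q = ι a

/-- An ideal (a priori only a left ideal) is two-sided. -/
def IsTwoSided {S : Type u} [Ring S] (I : Ideal S) : Prop := ∀ x ∈ I, ∀ r : S, x * r ∈ I

/-- ACC on two-sided ideals. -/
def AccTwoSided (S : Type u) [Ring S] : Prop :=
  ∀ f : ℕ → Ideal S, (∀ n, IsTwoSided (f n)) → (∀ n, f n ≤ f (n + 1)) →
    ∃ N, ∀ m, N ≤ m → f m = f N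

/-- A trivially ordered set: no strict comparabilities. -/
def TrivOrd (P : Type u) [Preorder P] : Prop := ∀ x y : P, ¬ x < y

/-- `DevLE α P` : the deviation (in the sense of Gabriel–Rentschler) of the
poset `P` is at most `α` (where trivially ordered intervals count as having
deviation `-∞`). -/
def DevLE (α : Ordinal.{v}) (P : Type u) [Preorder P] : Prop :=
  ∀ f : ℕ → P, (∀ n, f (n + 1) ≤ f n) →
    ∃ N : ℕ, ∀ n, N ≤ n →
      TrivOrd ↥(Set.Icc (f (n + 1)) (f n)) ∨
      ∃ β, ∃ _ : β < α, DevLE β ↥(Set.Icc (f (n + 1)) (f n))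
termination_by α

/-- `R` has left Krull dimension in the sense of Gabriel–Rentschler: the
poset of left ideals of `R` has deviation. -/
def HasLeftKrullDim (R : Type u) [Ring R] : Prop :=
  ∃ α : Ordinal.{u}, DevLE α (Ideal R)

/-- `(A, ι, τ)` is a Cohn–Jordan extension of `(R, σ)`: `ι : R → A` is an
injective embedding, the automorphism `τ` of `A` extends `σ`, and every
element of `A` is mapped into `R` by some positive power of `τ`. -/
structure IsCohnJordan {R A : Type u} [Ring R] [Ring A] (σ : R →+* R) (ι : R →+* A)
    (τ : A ≃+* A) : Prop where
  inj : Function.Injective ι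
  comm : ∀ r : R, τ (ι r) = ι (σ r)
  small : ∀ a : A, ∃ n : ℕ, 1 ≤ n ∧ (⇑τ)^[n] a ∈ Set.range ι

namespace Stmt16Aux

variable {R : Type u} [Ring R]

lemma mem_lAnn {X : Set R} {a : R} : a ∈ lAnnIdeal R X ↔ ∀ x ∈ X, a * x = 0 := Iff.rfl

lemma pow_succ_mem {T : Ideal R} {a : R} (ha : a ∈ T) : ∀ m : ℕ, a ^ (m + 1) ∈ T := by
  intro m
  induction m with
  | zero => simpa using ha
  | succ n ih => rw [pow_succ']; exact Ideal.mul_mem_left T a ih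

/-- In a semiprime left noetherian ring, every nonzero left ideal contains a
non-nilpotent element. -/
lemma exists_nonnilpotent (hsp : IsSemiprimeRing R) [IsNoetherianRing R]
    {T : Ideal R} (hT : T ≠ ⊥) : ∃ a ∈ T, ∀ n : ℕ, a ^ (n + 1) ≠ 0 := by
  classical
  by_contra hcon
  push_neg at hcon
  obtain ⟨x0, hx0T, hx0⟩ := (Submodule.ne_bot_iff T).mp hT
  have hmax := (set_has_maximal_iff_noetherian.mpr (inferInstance : IsNoetherian R R))
    {J | ∃ x, x ∈ T ∧ x ≠ 0 ∧ J = lAnnIdeal R {x}} ⟨_, x0, hx0T, hx0, rfl⟩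
  obtain ⟨M, ⟨a, haT, ha0, rfl⟩, hMmax⟩ := hmax
  -- maximality helper
  have hmaxle : ∀ y : R, y ∈ T → y ≠ 0 → lAnnIdeal R {a} ≤ lAnnIdeal R {y} →
      lAnnIdeal R {y} = lAnnIdeal R {a} := by
    intro y hyT hy0 hle
    rcases hle.lt_or_eq with hlt | heq
    · exact absurd hlt (hMmax _ ⟨y, hyT, hy0, rfl⟩)
    · exact heq.symm
  -- minimal nilpotency index of a
  have hPa : ∃ n, a ^ (n + 1) = 0 := hcon a haT
  set k := Nat.find hPa with hkdef
  have hk : a ^ (k + 1) = 0 := Nat.find_spec hPa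
  have hkmin : ∀ m, m < k → a ^ (m + 1) ≠ 0 := fun m hm => Nat.find_min hPa hm
  have hk0 : k ≠ 0 := by
    intro h
    rw [h] at hk
    simp only [zero_add, pow_one] at hk
    exact ha0 hk
  set b := a ^ k with hbdef
  have hb0 : b ≠ 0 := by
    have := hkmin (k - 1) (by omega)
    rwa [Nat.sub_add_cancel (by omega)] at this
  have hbT : b ∈ T := by
    have := pow_succ_mem haT (k - 1)
    rwa [Nat.sub_add_cancel (by omega)] at this
  have hle_ab : lAnnIdeal R {a} ≤ lAnnIdeal R {b} := by
    intro z hz x hx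
    rw [Set.mem_singleton_iff] at hx; subst hx
    have hza : z * a = 0 := hz a rfl
    have hb' : b = a * a ^ (k - 1) := by
      rw [hbdef, ← pow_succ']
      congr 1
      omega
    rw [hb', ← mul_assoc, hza, zero_mul]
  have heq_b : lAnnIdeal R {b} = lAnnIdeal R {a} := hmaxle b hbT hb0 hle_ab
  -- b * b = 0
  have hbb : b * b = 0 := by
    have : b * b = a ^ (k + 1) * a ^ (k - 1) := by
      rw [hbdef, ← pow_add, ← pow_add]
      congr 1
      omega
    rw [this, hk, zero_mul]
  -- semiprime: ∃ r, b * r * b ≠ 0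
  have hrex : ∃ r : R, b * r * b ≠ 0 := by
    by_contra h
    push_neg at h
    exact hb0 (hsp b h)
  obtain ⟨r, hr⟩ := hrex
  have hrb0 : r * b ≠ 0 := by
    intro h
    apply hr
    rw [mul_assoc, h, mul_zero]
  -- minimal nilpotency index of r * b
  have hrbT : r * b ∈ T := Ideal.mul_mem_left T r hbT
  have hPm : ∃ n, (r * b) ^ (n + 1) = 0 := hcon _ hrbT
  set m := Nat.find hPm with hmdef
  have hm : (r * b) ^ (m + 1) = 0 := Nat.find_spec hPm
  have hmmin : ∀ j, j < m → (r * b) ^ (j + 1) ≠ 0 := fun j hj => Nat.find_min hPm hj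
  have hm0 : m ≠ 0 := by
    intro h
    rw [h] at hm
    simp only [zero_add, pow_one] at hm
    exact hrb0 hm
  set w := b * r * b with hwdef
  have hwT : w ∈ T := Ideal.mul_mem_left T (b * r) hbT
  have hle_bw : lAnnIdeal R {b} ≤ lAnnIdeal R {w} := by
    intro z hz x hx
    rw [Set.mem_singleton_iff] at hx; subst hx
    have hzb : z * b = 0 := hz b rfl
    rw [hwdef, mul_assoc b r b, ← mul_assoc, hzb, zero_mul]
  have heq_w : lAnnIdeal R {w} = lAnnIdeal R {a} :=
    hmaxle w hwT hr (le_trans hle_ab hle_bw)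
  -- z := (r*b)^(m-1) * r kills w
  set z := (r * b) ^ (m - 1) * r with hzdef
  have hzw : z * w = 0 := by
    have h1 : z * w = (r * b) ^ (m - 1) * ((r * b) * (r * b)) := by
      rw [hzdef, hwdef]
      simp only [mul_assoc]
    have h2 : (r * b) ^ (m - 1) * ((r * b) * (r * b)) = (r * b) ^ (m + 1) := by
      rw [← pow_two, ← pow_add]
      congr 1
      omega
    rw [h1, h2, hm]
  have hz_ann_b : z * b = 0 := by
    have hz_w : z ∈ lAnnIdeal R {w} := by
      intro x hx; rw [Set.mem_singleton_iff] at hx; subst hx; exact hzw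
    rw [heq_w, ← heq_b] at hz_w
    exact hz_w b rfl
  -- contradiction with minimality of m
  have : (r * b) ^ ((m - 1) + 1) = 0 := by
    rw [pow_succ]
    have h3 : (r * b) ^ (m - 1) * (r * b) = z * b := by rw [hzdef, mul_assoc]
    rw [h3, hz_ann_b]
  exact hmmin (m - 1) (by omega) this

/-- Every nonzero left ideal contains a nonzero `b` with `lAnn(b²) ⊆ lAnn(b)`. -/
lemma exists_sq_cancel (hsp : IsSemiprimeRing R) [IsNoetherianRing R]
    {T : Ideal R} (hT : T ≠ ⊥) :
    ∃ b, b ∈ T ∧ b ≠ 0 ∧ ∀ x : R, x * (b * b) = 0 → x * b = 0 := by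
  obtain ⟨a, haT, hpow⟩ := exists_nonnilpotent hsp hT
  have hmono : Monotone (fun n => lAnnIdeal R {a ^ (n + 1)}) := by
    apply monotone_nat_of_le_succ
    intro n z hz x hx
    rw [Set.mem_singleton_iff] at hx; subst hx
    have hza : z * a ^ (n + 1) = 0 := hz _ rfl
    rw [pow_succ, ← mul_assoc, hza, zero_mul]
  obtain ⟨N, hN⟩ := (monotone_stabilizes_iff_noetherian.mpr
    (inferInstance : IsNoetherian R R)) ⟨_, hmono⟩
  refine ⟨a ^ (N + 1), ?_, hpow N, ?_⟩
  · exact pow_succ_mem haT N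
  · intro x hx
    have hx' : x ∈ lAnnIdeal R {a ^ (2 * N + 1 + 1)} := by
      intro y hy
      rw [Set.mem_singleton_iff] at hy; subst hy
      have h2 : a ^ (2 * N + 1 + 1) = a ^ (N + 1) * a ^ (N + 1) := by
        rw [← pow_add]
        congr 1
        omega
      rw [h2]
      exact hx
    have hkey : lAnnIdeal R {a ^ (N + 1)} = lAnnIdeal R {a ^ (2 * N + 1 + 1)} :=
      hN (2 * N + 1) (by omega)
    rw [← hkey] at hx'
    exact hx' _ rfl

/-- Orthogonal list with square-cancellation, inside `L`. -/
def GoodList (L : Ideal R) (as : List R) : Prop :=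
  (∀ a ∈ as, a ∈ L) ∧ (∀ a ∈ as, ∀ x : R, x * (a * a) = 0 → x * a = 0) ∧
    as.Pairwise (fun p q => q * p = 0)

lemma goodList_tail {L : Ideal R} {a : R} {t : List R} (h : GoodList L (a :: t)) :
    GoodList L t :=
  ⟨fun c hc => h.1 c (List.mem_cons_of_mem a hc),
   fun c hc => h.2.1 c (List.mem_cons_of_mem a hc),
   (List.pairwise_cons.mp h.2.2).2⟩

lemma sum_mul_zero {t : List R} {a : R} (h : ∀ b ∈ t, b * a = 0) : t.sum * a = 0 := by
  induction t with
  | nil => simp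
  | cons b t ih =>
    rw [List.sum_cons, add_mul, h b (List.mem_cons_self),
      ih (fun x hx => h x (List.mem_cons_of_mem b hx)), add_zero]

lemma peel {L : Ideal R} : ∀ as : List R, GoodList L as → ∀ x : R, x * as.sum = 0 →
    ∀ a ∈ as, x * a = 0 := by
  intro as
  induction as with
  | nil => intro _ x _ a ha; simp at ha
  | cons a t ih =>
    intro hg x hx b hb
    have hpw := List.pairwise_cons.mp hg.2.2
    rw [List.sum_cons] at hx
    have h1 : x * a + x * t.sum = 0 := by rw [← mul_add]; exact hx
    have h3 : x * t.sum * a = 0 := by rw [mul_assoc, sum_mul_zero hpw.1, mul_zero]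
    have h4 : x * (a * a) = 0 := by
      have h2 : (x * a + x * t.sum) * a = 0 := by rw [h1, zero_mul]
      rw [add_mul, h3, add_zero, mul_assoc] at h2
      exact h2
    have hxa : x * a = 0 := hg.2.1 a (List.mem_cons_self) x h4
    have hxs : x * t.sum = 0 := by rwa [hxa, zero_add] at h1
    rcases List.mem_cons.mp hb with rfl | hbt
    · exact hxa
    · exact ih (goodList_tail hg) x hxs b hbt

lemma mem_span_eq_zero {L : Ideal R} : ∀ as : List R, GoodList L as → ∀ b : R,
    (∀ a ∈ as, b * a = 0) → b ∈ Ideal.span {x | x ∈ as} → b = 0 := by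
  intro as
  induction as with
  | nil =>
    intro _ b _ hb
    have hset : ({x | x ∈ ([] : List R)} : Set R) = ∅ := by ext y; simp
    rw [hset, Ideal.span_empty] at hb
    simpa using hb
  | cons a t ih =>
    intro hg b hbz hb
    have hpw := List.pairwise_cons.mp hg.2.2
    have hset : ({x | x ∈ a :: t} : Set R) = insert a {x | x ∈ t} := by ext y; simp
    rw [hset, ← Ideal.submodule_span_eq, Submodule.mem_span_insert] at hb
    obtain ⟨r, z, hz, rfl⟩ := hb
    have hz_ann : z * a = 0 := by
      have hle : Ideal.span {x | x ∈ t} ≤ lAnnIdeal R {a} := by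
        rw [Ideal.span_le]
        intro y hy x hx
        rw [Set.mem_singleton_iff] at hx; subst hx
        exact hpw.1 y hy
      exact hle hz a rfl
    have hba : (r • a + z) * a = 0 := hbz a (List.mem_cons_self)
    have hra2 : r * (a * a) = 0 := by
      rw [add_mul, hz_ann, add_zero, smul_eq_mul, mul_assoc] at hba
      exact hba
    have hra : r * a = 0 := hg.2.1 a (List.mem_cons_self) r hra2
    have hsimp : r • a + z = z := by rw [smul_eq_mul, hra, zero_add]
    rw [hsimp]
    rw [hsimp] at hbz
    exact ih (goodList_tail hg) z (fun c hc => hbz c (List.mem_cons_of_mem a hc)) hz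

/-- An essential left ideal of a semiprime left noetherian ring contains an
element with zero left annihilator. -/
lemma exists_left_reg (hsp : IsSemiprimeRing R) [IsNoetherianRing R]
    {L : Ideal R} (hess : IsEssentialLeftIdeal L) :
    ∃ c ∈ L, ∀ x : R, x * c = 0 → x = 0 := by
  classical
  have hmax := (set_has_maximal_iff_noetherian.mpr (inferInstance : IsNoetherian R R))
    {J | ∃ as : List R, GoodList L as ∧ J = Ideal.span {x | x ∈ as}}
    ⟨⊥, [], ⟨by simp, by simp, List.Pairwise.nil⟩, by
      have hset : ({x | x ∈ ([] : List R)} : Set R) = ∅ := by ext y; simp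
      rw [hset, Ideal.span_empty]⟩
  obtain ⟨J, ⟨as, hgood, rfl⟩, hJmax⟩ := hmax
  have hT : L ⊓ lAnnIdeal R {x | x ∈ as} = ⊥ := by
    by_contra hne
    obtain ⟨b, hbmem, hb0, hbsq⟩ := exists_sq_cancel hsp hne
    have hbL : b ∈ L := hbmem.1
    have hbann : ∀ a ∈ as, b * a = 0 := fun a ha => hbmem.2 a ha
    have hgood' : GoodList L (as ++ [b]) := by
      refine ⟨?_, ?_, ?_⟩
      · intro c hc
        rcases List.mem_append.mp hc with h | h
        · exact hgood.1 c h
        · rw [List.mem_singleton.mp h]; exact hbL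
      · intro c hc
        rcases List.mem_append.mp hc with h | h
        · exact hgood.2.1 c h
        · rw [List.mem_singleton.mp h]; exact hbsq
      · rw [List.pairwise_append]
        refine ⟨hgood.2.2, List.pairwise_singleton _ _, ?_⟩
        intro p hp q hq
        rw [List.mem_singleton.mp hq]
        exact hbann p hp
    apply hJmax _ ⟨as ++ [b], hgood', rfl⟩
    apply lt_of_le_of_ne
    · apply Ideal.span_mono
      intro y hy
      exact List.mem_append.mpr (Or.inl hy)
    · intro heq
      apply hb0
      apply mem_span_eq_zero as hgood b hbann
      rw [heq]
      exact Ideal.subset_span (List.mem_append.mpr (Or.inr (List.mem_singleton_self b)))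
  have hann0 : lAnnIdeal R {x | x ∈ as} = ⊥ := by
    by_contra h
    exact hess _ h hT
  refine ⟨as.sum, list_sum_mem (fun x hx => hgood.1 x hx), ?_⟩
  intro x hx
  have hx' : x ∈ lAnnIdeal R {y | y ∈ as} := fun y hy => peel as hgood x hx y hy
  rw [hann0] at hx'
  exact (Submodule.mem_bot R).mp hx'

lemma iter_zero (σ : R →+* R) : ∀ n : ℕ, (⇑σ)^[n] (0 : R) = 0 := by
  intro n
  induction n with
  | zero => rfl
  | succ n ih => rw [Function.iterate_succ_apply', ih, map_zero]

lemma iter_add (σ : R →+* R) : ∀ (n : ℕ) (a b : R),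
    (⇑σ)^[n] (a + b) = (⇑σ)^[n] a + (⇑σ)^[n] b := by
  intro n
  induction n with
  | zero => intro a b; rfl
  | succ n ih =>
    intro a b
    rw [Function.iterate_succ_apply', Function.iterate_succ_apply',
      Function.iterate_succ_apply', ih, map_add]

lemma iter_mul (σ : R →+* R) : ∀ (n : ℕ) (a b : R),
    (⇑σ)^[n] (a * b) = (⇑σ)^[n] a * (⇑σ)^[n] b := by
  intro n
  induction n with
  | zero => intro a b; rfl
  | succ n ih =>
    intro a b
    rw [Function.iterate_succ_apply', Function.iterate_succ_apply',
      Function.iterate_succ_apply', ih, map_mul]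

/-- The ascending chain `{x : σⁿ(x) ∈ R·σⁿ(c)}`. -/
def chainX (σ : R →+* R) (c : R) (n : ℕ) : Ideal R where
  carrier := {x | ∃ y : R, (⇑σ)^[n] x = y * (⇑σ)^[n] c}
  add_mem' := by
    rintro a b ⟨y, hy⟩ ⟨z, hz⟩
    exact ⟨y + z, by rw [iter_add, hy, hz, add_mul]⟩
  zero_mem' := ⟨0, by rw [iter_zero, zero_mul]⟩
  smul_mem' := by
    rintro r a ⟨y, hy⟩
    exact ⟨(⇑σ)^[n] r * y, by rw [smul_eq_mul, iter_mul, hy, mul_assoc]⟩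

lemma chainX_mono (σ : R →+* R) (c : R) : Monotone (chainX σ c) := by
  apply monotone_nat_of_le_succ
  rintro n x ⟨y, hy⟩
  exact ⟨σ y, by rw [Function.iterate_succ_apply', hy, map_mul,
    Function.iterate_succ_apply' (⇑σ) n c]⟩

lemma mem_chainX {σ : R →+* R} {c : R} {n : ℕ} {x : R} :
    x ∈ chainX σ c n ↔ ∃ y : R, (⇑σ)^[n] x = y * (⇑σ)^[n] c := Iff.rfl

end Stmt16Aux

/-- An injective endomorphism `σ` of a semiprime left noetherian ring `R`
is an automorphism iff there is an essential left ideal `L ⊆ σ(R)` of `R`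
such that `σⁿ(L)` is a left ideal of `R` for every `n`. -/
theorem stmt16 {R : Type u} [Ring R] (hsp : IsSemiprimeRing R) [IsNoetherianRing R]
    (σ : R →+* R) (hinj : Function.Injective σ) :
    Function.Bijective σ ↔
      ∃ L : Ideal R, IsEssentialLeftIdeal L ∧ (L : Set R) ⊆ Set.range σ ∧
        ∀ n : ℕ, ∃ I : Ideal R, (I : Set R) = (⇑σ)^[n] '' (L : Set R) := by
  constructor
  · intro hbij
    refine ⟨⊤, ?_, ?_, ?_⟩
    · intro I hI h
      rw [top_inf_eq] at h
      exact hI h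
    · intro x _
      exact hbij.2 x
    · intro n
      refine ⟨⊤, ?_⟩
      have hsurj : Function.Surjective (⇑σ)^[n] := Function.Surjective.iterate hbij.2 n
      rw [Submodule.top_coe, Set.image_univ, hsurj.range_eq]
  · rintro ⟨L, hess, hsub, hIn⟩
    refine ⟨hinj, ?_⟩
    -- the left-regular element of L
    obtain ⟨c, hcL, hcreg⟩ := Stmt16Aux.exists_left_reg hsp hess
    -- its iterates remain left-regular
    have hregn : ∀ n : ℕ, ∀ x : R, x * (⇑σ)^[n] c = 0 → x = 0 := by
      intro n
      induction n with
      | zero => exact hcreg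
      | succ n ih =>
        intro x hx
        by_contra hx0
        have hsx : Ideal.span {x} ≠ ⊥ := by
          intro h
          apply hx0
          have hxmem : x ∈ Ideal.span {x} := Ideal.subset_span rfl
          rw [h] at hxmem
          exact (Submodule.mem_bot R).mp hxmem
        obtain ⟨y, hy, hy0⟩ := (Submodule.ne_bot_iff _).mp (hess _ hsx)
        obtain ⟨hyL, hyx⟩ := Submodule.mem_inf.mp hy
        have hyx' : y ∈ Submodule.span R {x} := by
          rw [Ideal.submodule_span_eq]
          exact hyx
        obtain ⟨aa, haa⟩ := Submodule.mem_span_singleton.mp hyx'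
        obtain ⟨u, hu⟩ := hsub hyL
        have hu0 : u ≠ 0 := by
          intro h
          apply hy0
          rw [← hu, h, map_zero]
        apply hu0
        apply ih
        apply hinj
        rw [map_mul, map_zero, hu, ← Function.iterate_succ_apply' σ n c, ← haa,
          smul_eq_mul, mul_assoc, hx, mul_zero]
    -- the ascending chain
    obtain ⟨N, hN⟩ := (monotone_stabilizes_iff_noetherian.mpr
      (inferInstance : IsNoetherian R R)) ⟨_, Stmt16Aux.chainX_mono σ c⟩
    intro r
    obtain ⟨I, hI⟩ := hIn (N + 1)
    have hcI : (⇑σ)^[N + 1] c ∈ I := by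
      have hmem : (⇑σ)^[N + 1] c ∈ (⇑σ)^[N + 1] '' (L : Set R) := ⟨c, hcL, rfl⟩
      rw [← hI] at hmem
      exact hmem
    have hrI : r * (⇑σ)^[N + 1] c ∈ (⇑σ)^[N + 1] '' (L : Set R) := by
      rw [← hI]
      exact Ideal.mul_mem_left I r hcI
    obtain ⟨l, hlL, hl⟩ := hrI
    have hlX : l ∈ Stmt16Aux.chainX σ c (N + 1) := ⟨r, hl⟩
    have hlXN : l ∈ Stmt16Aux.chainX σ c N := by
      have h1 := hN (N + 1) (Nat.le_succ N)
      have h2 : l ∈ (⟨Stmt16Aux.chainX σ c, Stmt16Aux.chainX_mono σ c⟩ : ℕ →o Ideal R) (N + 1) :=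
        hlX
      rw [← h1] at h2
      exact h2
    obtain ⟨z, hz⟩ := hlXN
    have hzz : (⇑σ)^[N + 1] l = σ z * (⇑σ)^[N + 1] c := by
      rw [Function.iterate_succ_apply', hz, map_mul, Function.iterate_succ_apply' (⇑σ) N c]
    have hzero : (r - σ z) * (⇑σ)^[N + 1] c = 0 := by
      rw [sub_mul, ← hl, hzz, sub_self]
    have hfin : r - σ z = 0 := hregn (N + 1) _ hzero
    exact ⟨z, (sub_eq_zero.mp hfin).symm⟩
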